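/- Let ρ ∈ H¹(Ω) be a positive minimizer of E_ε(v) = (1/2)∫_Ω |∇v|² + (1/(2ε²))(a - |v|²)², and let A ∈ L²(Ω, ℝ³). Then for every u ∈ H¹(Ω, ℂ) with ρu ∈ H¹(Ω,ℂ), one has E_ε(ρu, A) = E_ε(ρ) + (1/2)∫_Ω ρ²|∇_A u|² + (ρ⁴/(2ε²))(1 - |u|²)², where E_ε(w, A) = (1/2)∫_Ω |∇_A w|² + (1/(2ε²))(a - |w|²)² and ∇_A = ∇ - iA. -/

import Mathlib

open MeasureTheory

noncomputable section

abbrev E3 : Type := EuclideanSpace ℝ (Fin 3)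

def pd (f : E3 → ℝ) (j : Fin 3) (x : E3) : ℝ := fderiv ℝ f x (EuclideanSpace.single j 1)

def gradSqR (f : E3 → ℝ) (x : E3) : ℝ := ∑ j : Fin 3, (pd f j x) ^ 2

/-- Squared norm of the covariant gradient `∇_A u = ∇u - iAu`. -/
def covSq (u : E3 → ℂ) (A : E3 → E3) (x : E3) : ℝ :=
  ∑ j : Fin 3, ‖fderiv ℝ u x (EuclideanSpace.single j 1) - Complex.I * (A x j : ℂ) * u x‖ ^ 2

def lap (f : E3 → ℝ) (x : E3) : ℝ :=
  ∑ j : Fin 3, fderiv ℝ (fun y => pd f j y) x (EuclideanSpace.single j 1)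

set_option maxHeartbeats 2000000

/- ### Auxiliary lemmas -/

lemma c1_eq_zero {c1 c2 c3 c4 : ℝ} (h : ∀ t : ℝ, 0 ≤ c1*t + c2*t^2 + c3*t^3 + c4*t^4) :
    c1 = 0 := by
  have hc : Continuous fun t : ℝ => c1 + c2*t + c3*t^2 + c4*t^3 := by continuity
  have key : ∀ t : ℝ, 0 ≤ t * (c1 + c2*t + c3*t^2 + c4*t^3) := by
    intro t; have h0 := h t; nlinarith
  have h1 : (0:ℝ) ≤ c1 := by
    have ht : Filter.Tendsto (fun t : ℝ => c1 + c2*t + c3*t^2 + c4*t^3)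
        (nhdsWithin 0 (Set.Ioi 0)) (nhds c1) := by
      have h2 := ((hc.tendsto 0).mono_left (nhdsWithin_le_nhds (s := Set.Ioi (0:ℝ))))
      simpa using h2
    refine ge_of_tendsto ht ?_
    filter_upwards [self_mem_nhdsWithin] with t (ht' : t ∈ Set.Ioi 0)
    exact le_of_not_gt fun hf => absurd (key t) (not_le.2 (mul_neg_of_pos_of_neg ht' hf))
  have h2 : c1 ≤ 0 := by
    have ht : Filter.Tendsto (fun t : ℝ => c1 + c2*t + c3*t^2 + c4*t^3)
        (nhdsWithin 0 (Set.Iio 0)) (nhds c1) := by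
      have h2 := ((hc.tendsto 0).mono_left (nhdsWithin_le_nhds (s := Set.Iio (0:ℝ))))
      simpa using h2
    refine le_of_tendsto ht ?_
    filter_upwards [self_mem_nhdsWithin] with t (ht' : t ∈ Set.Iio 0)
    exact le_of_not_gt fun hf => absurd (key t) (not_le.2 (mul_neg_of_neg_of_pos ht' hf))
  linarith

lemma pd_mul_complex (ρ : E3 → ℝ) (u : E3 → ℂ) (hρ : Differentiable ℝ ρ)
    (hu : Differentiable ℝ u) (x w : E3) :
    fderiv ℝ (fun y => (ρ y : ℂ) * u y) x w
      = (fderiv ℝ ρ x w : ℂ) * u x + (ρ x : ℂ) * (fderiv ℝ u x w) := by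
  have hρc : DifferentiableAt ℝ (fun y => (ρ y : ℂ)) x :=
    Complex.ofRealCLM.differentiableAt.comp x (hρ x)
  have h1 : fderiv ℝ (fun y => (ρ y : ℂ)) x = Complex.ofRealCLM.comp (fderiv ℝ ρ x) := by
    rw [show (fun y => (ρ y : ℂ)) = Complex.ofRealCLM ∘ ρ from rfl]
    rw [fderiv_comp x Complex.ofRealCLM.differentiableAt (hρ x), ContinuousLinearMap.fderiv]
  rw [fderiv_fun_mul hρc (hu x), h1]
  simp [smul_eq_mul]
  ring

lemma pd_re (u : E3 → ℂ) (hu : Differentiable ℝ u) (x w : E3) :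
    fderiv ℝ (fun y => (u y).re) x w = (fderiv ℝ u x w).re := by
  rw [show (fun y => (u y).re) = Complex.reCLM ∘ u from rfl]
  rw [fderiv_comp x Complex.reCLM.differentiableAt (hu x), ContinuousLinearMap.fderiv]
  rfl

lemma pd_im (u : E3 → ℂ) (hu : Differentiable ℝ u) (x w : E3) :
    fderiv ℝ (fun y => (u y).im) x w = (fderiv ℝ u x w).im := by
  rw [show (fun y => (u y).im) = Complex.imCLM ∘ u from rfl]
  rw [fderiv_comp x Complex.imCLM.differentiableAt (hu x), ContinuousLinearMap.fderiv]
  rfl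

lemma pd_phi (ρ : E3 → ℝ) (u : E3 → ℂ) (hρ : Differentiable ℝ ρ)
    (hu : Differentiable ℝ u) (x w : E3) :
    fderiv ℝ (fun y => ρ y * ((u y).re * (u y).re + (u y).im * (u y).im - 1)) x w
      = fderiv ℝ ρ x w * ((u x).re * (u x).re + (u x).im * (u x).im - 1)
        + ρ x * (2 * (u x).re * (fderiv ℝ u x w).re + 2 * (u x).im * (fderiv ℝ u x w).im) := by
  have hu1 : Differentiable ℝ (fun y => (u y).re) := fun y =>
    Complex.reCLM.differentiableAt.comp y (hu y)
  have hu2 : Differentiable ℝ (fun y => (u y).im) := fun y =>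
    Complex.imCLM.differentiableAt.comp y (hu y)
  have hin : DifferentiableAt ℝ (fun y => (u y).re * (u y).re + (u y).im * (u y).im - 1) x :=
    (((hu1 x).mul (hu1 x)).add ((hu2 x).mul (hu2 x))).sub_const 1
  have h2 : fderiv ℝ (fun y => (u y).re * (u y).re + (u y).im * (u y).im - 1) x w
      = 2 * (u x).re * (fderiv ℝ u x w).re + 2 * (u x).im * (fderiv ℝ u x w).im := by
    rw [fderiv_sub_const]
    rw [fderiv_fun_add (f := fun y => (u y).re * (u y).re) (g := fun y => (u y).im * (u y).im) ((hu1 x).mul (hu1 x)) ((hu2 x).mul (hu2 x))]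
    rw [ContinuousLinearMap.add_apply, fderiv_fun_mul (hu1 x) (hu1 x), fderiv_fun_mul (hu2 x) (hu2 x)]
    simp only [ContinuousLinearMap.add_apply, ContinuousLinearMap.smul_apply, smul_eq_mul]
    rw [pd_re u hu x w, pd_im u hu x w]
    ring
  rw [fderiv_fun_mul (hρ x) hin]
  simp only [ContinuousLinearMap.add_apply, ContinuousLinearMap.smul_apply, smul_eq_mul]
  rw [h2]
  ring

lemma pd_add_mul (ρ φf : E3 → ℝ) (hρ : Differentiable ℝ ρ) (hφ : Differentiable ℝ φf)
    (t : ℝ) (x w : E3) :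
    fderiv ℝ (fun y => ρ y + t * φf y) x w = fderiv ℝ ρ x w + t * fderiv ℝ φf x w := by
  rw [fderiv_fun_add (hρ x) ((hφ x).const_mul t), ContinuousLinearMap.add_apply,
    fderiv_const_mul (hφ x) t]
  simp

lemma key_ptwise (ε av : ℝ) (ρ : E3 → ℝ) (u : E3 → ℂ) (A : E3 → E3)
    (hρ : Differentiable ℝ ρ) (hu : Differentiable ℝ u) (x : E3) :
    ((1:ℝ)/2) * covSq (fun y => (ρ y : ℂ) * u y) A x + 1/(2*ε^2) * (av - ‖(ρ x : ℂ) * u x‖^2)^2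
      = (((1:ℝ)/2) * gradSqR ρ x + 1/(2*ε^2) * (av - ρ x^2)^2)
        + ((((1:ℝ)/2) * ρ x^2 * covSq u A x + (ρ x^4/(2*ε^2)) * (1 - ‖u x‖^2)^2)
        + (1/2) * ((∑ j : Fin 3, pd ρ j x
              * pd (fun y => ρ y * ((u y).re * (u y).re + (u y).im * (u y).im - 1)) j x)
            - (2/ε^2) * ((av - ρ x^2)
              * (ρ x * (ρ x * ((u x).re * (u x).re + (u x).im * (u x).im - 1)))))) := by
  have hn : ∀ z : ℂ, ‖z‖^2 = z.re*z.re + z.im*z.im := fun z => by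
    rw [← Complex.normSq_eq_norm_sq, Complex.normSq_apply]
  simp only [covSq, gradSqR, pd, Fin.sum_univ_three, pd_mul_complex ρ u hρ hu x,
    pd_phi ρ u hρ hu x, hn, Complex.sub_re, Complex.sub_im, Complex.add_re, Complex.add_im,
    Complex.mul_re, Complex.mul_im, Complex.I_re, Complex.I_im, Complex.ofReal_re,
    Complex.ofReal_im]
  ring

lemma poly_ptwise (ε av t : ℝ) (ρ φf : E3 → ℝ) (hρ : Differentiable ℝ ρ)
    (hφ : Differentiable ℝ φf) (x : E3) :
    ((1:ℝ)/2) * gradSqR (fun y => ρ y + t * φf y) x + 1/(2*ε^2) * (av - (ρ x + t * φf x)^2)^2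
      = (((1:ℝ)/2) * gradSqR ρ x + 1/(2*ε^2) * (av - ρ x^2)^2)
        + (t * ((∑ j : Fin 3, pd ρ j x * pd φf j x) - (2/ε^2) * ((av - ρ x^2) * (ρ x * φf x)))
        + (t^2 * (((1:ℝ)/2) * gradSqR φf x
            + 1/(2*ε^2) * ((2*ρ x*φf x)^2 - 2*(av - ρ x^2)*(φf x)^2))
        + (t^3 * (1/(2*ε^2) * (2*(2*ρ x*φf x)*(φf x)^2))
        + t^4 * (1/(2*ε^2) * (φf x)^4)))) := by
  simp only [gradSqR, pd, Fin.sum_univ_three, pd_add_mul ρ φf hρ hφ t x]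
  ring

lemma covSq_nonneg (u : E3 → ℂ) (A : E3 → E3) (x : E3) : 0 ≤ covSq u A x :=
  Finset.sum_nonneg fun _ _ => sq_nonneg _

lemma normAx_sq (y : E3) : ‖y‖^2 = (y 0)^2 + (y 1)^2 + (y 2)^2 := by
  rw [EuclideanSpace.norm_eq, Real.sq_sqrt (by positivity)]
  simp [Fin.sum_univ_three, Real.norm_eq_abs, sq_abs]

lemma covSq_weighted_intOn (Ω : Set E3) (hΩmeas : MeasurableSet Ω)
    (hΩbdd : Bornology.IsBounded Ω)
    (v : E3 → ℂ) (hv : ContDiff ℝ 1 v) (A : E3 → E3) (hA : MemLp A 2 (volume.restrict Ω))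
    (w : E3 → ℝ) (hw : Continuous w) :
    IntegrableOn (fun x => w x * covSq v A x) Ω volume := by
  have hK : IsCompact (closure Ω) := hΩbdd.isCompact_closure
  have hfin : volume Ω < ⊤ := hΩbdd.measure_lt_top
  have hvC : Continuous v := hv.continuous
  have hv' : Continuous (fderiv ℝ v) := (hv.fderiv_right (m := 0) (by norm_num)).continuous
  obtain ⟨M1, hM1⟩ := hK.exists_bound_of_continuousOn hv'.continuousOn
  obtain ⟨M2, hM2⟩ := hK.exists_bound_of_continuousOn hvC.continuousOn
  obtain ⟨M3, hM3⟩ := hK.exists_bound_of_continuousOn hw.continuousOn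
  set C1 := max M1 0 with hC1d
  set C2 := max M2 0 with hC2d
  set C3 := max M3 0 with hC3d
  have hC1 : ∀ x ∈ closure Ω, ‖fderiv ℝ v x‖ ≤ C1 := fun x hx => (hM1 x hx).trans (le_max_left _ _)
  have hC2 : ∀ x ∈ closure Ω, ‖v x‖ ≤ C2 := fun x hx => (hM2 x hx).trans (le_max_left _ _)
  have hC3 : ∀ x ∈ closure Ω, |w x| ≤ C3 := fun x hx => (hM3 x hx).trans (le_max_left _ _)
  have hC1n : 0 ≤ C1 := le_max_right _ _
  have hC2n : 0 ≤ C2 := le_max_right _ _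
  have hC3n : 0 ≤ C3 := le_max_right _ _
  have hA2 : Integrable (fun x => ‖A x‖^2) (volume.restrict Ω) := by
    have h := hA.integrable_norm_rpow two_ne_zero ENNReal.ofNat_ne_top
    refine h.congr (Filter.Eventually.of_forall fun x => ?_)
    norm_num
  have hAm : AEStronglyMeasurable A (volume.restrict Ω) := hA.aestronglyMeasurable
  have hmeas : AEStronglyMeasurable (fun x => w x * covSq v A x) (volume.restrict Ω) := by
    refine hw.aestronglyMeasurable.mul ?_
    unfold covSq
    refine Finset.aestronglyMeasurable_fun_sum _ fun j _ => ?_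
    have hAj : AEStronglyMeasurable (fun x => ((A x j : ℝ) : ℂ)) (volume.restrict Ω) :=
      (Complex.continuous_ofReal.comp
        (EuclideanSpace.proj (𝕜 := ℝ) j).continuous).comp_aestronglyMeasurable hAm
    have h1 : AEStronglyMeasurable
        (fun x => fderiv ℝ v x (EuclideanSpace.single j 1) - Complex.I * (A x j : ℂ) * v x)
        (volume.restrict Ω) := by
      refine (Continuous.aestronglyMeasurable ?_).sub
        (((hAj.const_mul Complex.I)).mul hvC.aestronglyMeasurable)
      exact hv'.clm_apply continuous_const
    exact h1.norm.pow 2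
  have hg1 : Integrable (fun _ : E3 => C3 * (6*C1^2)) (volume.restrict Ω) :=
    integrableOn_const hfin.ne
  have hg2 : Integrable (fun x : E3 => (C3 * (2*C2^2)) * ‖A x‖^2) (volume.restrict Ω) :=
    hA2.const_mul (C3 * (2*C2^2))
  have hg : Integrable (fun x : E3 => C3 * (6*C1^2) + (C3 * (2*C2^2)) * ‖A x‖^2)
      (volume.restrict Ω) := hg1.add hg2
  refine Integrable.mono' hg hmeas ?_
  filter_upwards [ae_restrict_mem hΩmeas] with x hx
  have hxK : x ∈ closure Ω := subset_closure hx
  have hcov_le : covSq v A x ≤ 6*C1^2 + 2*C2^2 * ‖A x‖^2 := by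
    have hj : ∀ j : Fin 3,
        ‖fderiv ℝ v x (EuclideanSpace.single j 1) - Complex.I * (A x j : ℂ) * v x‖ ^ 2
          ≤ 2*C1^2 + 2*C2^2*(A x j)^2 := by
      intro j
      have hd : ‖fderiv ℝ v x (EuclideanSpace.single j 1)‖ ≤ C1 := by
        calc ‖fderiv ℝ v x (EuclideanSpace.single j 1)‖
            ≤ ‖fderiv ℝ v x‖ * ‖EuclideanSpace.single j (1:ℝ)‖ :=
              (fderiv ℝ v x).le_opNorm _
          _ = ‖fderiv ℝ v x‖ := by rw [EuclideanSpace.norm_single]; simp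
          _ ≤ C1 := hC1 x hxK
      have hz : ‖Complex.I * (A x j : ℂ) * v x‖ = |A x j| * ‖v x‖ := by
        rw [norm_mul, norm_mul, Complex.norm_I, one_mul, Complex.norm_real, Real.norm_eq_abs]
      have htri : ‖fderiv ℝ v x (EuclideanSpace.single j 1) - Complex.I * (A x j : ℂ) * v x‖
          ≤ C1 + |A x j| * ‖v x‖ := by
        calc _ ≤ ‖fderiv ℝ v x (EuclideanSpace.single j 1)‖ + ‖Complex.I * (A x j : ℂ) * v x‖ :=
              norm_sub_le _ _
          _ ≤ C1 + |A x j| * ‖v x‖ := by rw [hz]; exact add_le_add hd le_rfl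
      have hvb := hC2 x hxK
      have h0 : (0:ℝ) ≤ ‖fderiv ℝ v x (EuclideanSpace.single j 1)
          - Complex.I * (A x j : ℂ) * v x‖ := norm_nonneg _
      nlinarith [sq_nonneg (C1 - |A x j| * ‖v x‖), abs_nonneg (A x j), norm_nonneg (v x),
        sq_nonneg (A x j), mul_le_mul htri htri h0 (by positivity : (0:ℝ) ≤ C1 + |A x j| * ‖v x‖),
        sq_abs (A x j), mul_le_mul hvb hvb (norm_nonneg _) hC2n,
        mul_nonneg (abs_nonneg (A x j)) (norm_nonneg (v x)),
        sq_nonneg (|A x j| * ‖v x‖ - |A x j| * C2)]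
    have hsum : covSq v A x ≤ ∑ j : Fin 3, (2*C1^2 + 2*C2^2*(A x j)^2) :=
      Finset.sum_le_sum fun j _ => hj j
    calc covSq v A x ≤ ∑ j : Fin 3, (2*C1^2 + 2*C2^2*(A x j)^2) := hsum
      _ = 6*C1^2 + 2*C2^2 * ‖A x‖^2 := by
          rw [normAx_sq (A x)]; simp [Fin.sum_univ_three]; ring
  have hcovn : 0 ≤ covSq v A x := covSq_nonneg v A x
  have hwb := hC3 x hxK
  have hAn : (0:ℝ) ≤ ‖A x‖^2 := sq_nonneg _
  rw [Real.norm_eq_abs, abs_mul, abs_of_nonneg hcovn]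
  nlinarith [mul_le_mul hwb hcov_le hcovn hC3n]

/-- the magnetic Lassoued–Mironescu decoupling
`E_ε(ρu, A) = E_ε(ρ) + (1/2)∫_Ω ρ²|∇_A u|² + (ρ⁴/(2ε²))(1 - |u|²)²`. -/
theorem stmt_2
    (Ω : Set E3) (hΩopen : IsOpen Ω) (hΩbdd : Bornology.IsBounded Ω) (hΩmeas : MeasurableSet Ω)
    (b ε : ℝ) (hb0 : 0 < b) (hb1 : b < 1) (hε : 0 < ε)
    (a : E3 → ℝ) (ha_meas : Measurable a) (ha : ∀ x ∈ Ω, b ≤ a x ∧ a x ≤ 1)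
    (ρ : E3 → ℝ) (hρreg : ContDiff ℝ 2 ρ) (hρpos : ∀ x ∈ closure Ω, 0 < ρ x)
    -- ρ is a minimizer of E_ε :
    (hmin : ∀ v : E3 → ℝ, ContDiff ℝ 1 v →
      (∫ x in Ω, (((1:ℝ)/2) * gradSqR ρ x + (1/(2*ε^2)) * (a x - ρ x ^ 2) ^ 2)) ≤
      ∫ x in Ω, (((1:ℝ)/2) * gradSqR v x + (1/(2*ε^2)) * (a x - v x ^ 2) ^ 2))
    -- and hence solves the Euler–Lagrange equation with Neumann boundary condition :
    (hPDE : ∀ x ∈ Ω, -lap ρ x = ρ x * (a x - ρ x ^ 2) / ε ^ 2)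
    (ν : E3 → E3) (hNeu : ∀ x ∈ frontier Ω, fderiv ℝ ρ x (ν x) = 0)
    (A : E3 → E3) (hA : MemLp A 2 (volume.restrict Ω))
    (u : E3 → ℂ) (hu : ContDiff ℝ 1 u) :
    (∫ x in Ω, (((1:ℝ)/2) * covSq (fun y => (ρ y : ℂ) * u y) A x
        + (1/(2*ε^2)) * (a x - ‖(ρ x : ℂ) * u x‖ ^ 2) ^ 2))
      = (∫ x in Ω, (((1:ℝ)/2) * gradSqR ρ x + (1/(2*ε^2)) * (a x - ρ x ^ 2) ^ 2))
        + ∫ x in Ω, (((1:ℝ)/2) * ρ x ^ 2 * covSq u A x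
            + (ρ x ^ 4 / (2*ε^2)) * (1 - ‖u x‖ ^ 2) ^ 2) := by
  -- basic regularity facts
  have hρ1 : ContDiff ℝ 1 ρ := hρreg.of_le (by norm_num)
  have hρd : Differentiable ℝ ρ := hρ1.differentiable one_ne_zero
  have hud : Differentiable ℝ u := hu.differentiable one_ne_zero
  have hK : IsCompact (closure Ω) := hΩbdd.isCompact_closure
  have hfin : volume Ω < ⊤ := hΩbdd.measure_lt_top
  have hρC : Continuous ρ := hρ1.continuous
  have hρ' : Continuous (fderiv ℝ ρ) := (hρreg.fderiv_right (m := 0) (by norm_num)).continuous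
  -- the test function φf
  set φf : E3 → ℝ := fun y => ρ y * ((u y).re * (u y).re + (u y).im * (u y).im - 1)
    with hφf_def
  have hsC : ContDiff ℝ 1 (fun y => (u y).re * (u y).re + (u y).im * (u y).im - 1) :=
    (((Complex.reCLM.contDiff.comp hu).mul (Complex.reCLM.contDiff.comp hu)).add
      ((Complex.imCLM.contDiff.comp hu).mul (Complex.imCLM.contDiff.comp hu))).sub contDiff_const
  have hφC1 : ContDiff ℝ 1 φf := hρ1.mul hsC
  have hφd : Differentiable ℝ φf := hφC1.differentiable one_ne_zero
  have hφ' : Continuous (fderiv ℝ φf) := (hφC1.fderiv_right (m := 0) (by norm_num)).continuous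
  have hφfC : Continuous φf := hφC1.continuous
  have hpdρC : ∀ j : Fin 3, Continuous (pd ρ j) := fun j => by
    unfold pd; exact hρ'.clm_apply continuous_const
  have hpdφC : ∀ j : Fin 3, Continuous (pd φf j) := fun j => by
    unfold pd; exact hφ'.clm_apply continuous_const
  have hgradρC : Continuous (gradSqR ρ) := by
    unfold gradSqR; exact continuous_finset_sum _ fun j _ => (hpdρC j).pow 2
  have hgradφC : Continuous (gradSqR φf) := by
    unfold gradSqR; exact continuous_finset_sum _ fun j _ => (hpdφC j).pow 2
  -- integrability helpers
  have contInt : ∀ f : E3 → ℝ, Continuous f → IntegrableOn f Ω volume := fun f hf =>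
    (hf.continuousOn.integrableOn_compact hK).mono_set subset_closure
  have bddInt : ∀ (f : E3 → ℝ) (C : ℝ), AEStronglyMeasurable f (volume.restrict Ω) →
      (∀ x ∈ Ω, |f x| ≤ C) → IntegrableOn f Ω volume := by
    intro f C hm hb
    have hgc : Integrable (fun _ : E3 => C) (volume.restrict Ω) :=
      integrableOn_const hfin.ne
    refine Integrable.mono' hgc hm ?_
    filter_upwards [ae_restrict_mem hΩmeas] with x hx
    rw [Real.norm_eq_abs]; exact hb x hx
  have haInt : ∀ (g1 g2 g3 : E3 → ℝ), Continuous g1 → Continuous g2 → Continuous g3 →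
      IntegrableOn (fun x => g1 x + a x * g2 x + a x^2 * g3 x) Ω volume := by
    intro g1 g2 g3 h1 h2 h3
    obtain ⟨D1, hD1⟩ := hK.exists_bound_of_continuousOn h1.continuousOn
    obtain ⟨D2, hD2⟩ := hK.exists_bound_of_continuousOn h2.continuousOn
    obtain ⟨D3, hD3⟩ := hK.exists_bound_of_continuousOn h3.continuousOn
    refine bddInt _ (|D1| + |D2| + |D3|) ?_ ?_
    · exact (h1.aestronglyMeasurable.add
        (ha_meas.aestronglyMeasurable.mul h2.aestronglyMeasurable)).add
        (((ha_meas.pow_const 2).aestronglyMeasurable).mul h3.aestronglyMeasurable)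
    · intro x hx
      have hab : |a x| ≤ 1 := by
        obtain ⟨hb1', hb2'⟩ := ha x hx
        rw [abs_le]; constructor <;> nlinarith
      have e1 : |g1 x| ≤ |D1| := by
        have := hD1 x (subset_closure hx); rw [Real.norm_eq_abs] at this
        exact this.trans (le_abs_self _)
      have e2 : |g2 x| ≤ |D2| := by
        have := hD2 x (subset_closure hx); rw [Real.norm_eq_abs] at this
        exact this.trans (le_abs_self _)
      have e3 : |g3 x| ≤ |D3| := by
        have := hD3 x (subset_closure hx); rw [Real.norm_eq_abs] at this
        exact this.trans (le_abs_self _)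
      calc |g1 x + a x * g2 x + a x^2 * g3 x|
          ≤ |g1 x| + |a x * g2 x| + |a x^2 * g3 x| :=
            (abs_add_le _ _).trans (add_le_add_left (abs_add_le _ _) _)
        _ ≤ |D1| + |D2| + |D3| := by
            rw [abs_mul, abs_mul, abs_pow]
            have h2' : |a x| * |g2 x| ≤ 1 * |D2| :=
              mul_le_mul hab e2 (abs_nonneg _) zero_le_one
            have ha2 : |a x|^2 ≤ 1 := by nlinarith [abs_nonneg (a x)]
            have h3' : |a x|^2 * |g3 x| ≤ 1 * |D3| :=
              mul_le_mul ha2 e3 (abs_nonneg _) zero_le_one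
            linarith
  -- integrability of the five polynomial coefficients
  have hP0int : IntegrableOn
      (fun x => ((1:ℝ)/2) * gradSqR ρ x + 1/(2*ε^2) * (a x - ρ x ^ 2)^2) Ω volume := by
    have he : (fun x => ((1:ℝ)/2) * gradSqR ρ x + 1/(2*ε^2) * (a x - ρ x ^ 2)^2)
        = fun x => (((1:ℝ)/2) * gradSqR ρ x + 1/(2*ε^2) * ρ x^4)
            + a x * (-(1/(2*ε^2)) * (2 * ρ x^2)) + a x^2 * (1/(2*ε^2)) := by
      funext x; ring
    rw [he]
    exact haInt _ _ _
      ((continuous_const.mul hgradρC).add (continuous_const.mul (hρC.pow 4)))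
      (continuous_const.mul (continuous_const.mul (hρC.pow 2))) continuous_const
  have hP1int : IntegrableOn
      (fun x => (∑ j : Fin 3, pd ρ j x * pd φf j x)
        - (2/ε^2) * ((a x - ρ x^2) * (ρ x * φf x))) Ω volume := by
    have he : (fun x => (∑ j : Fin 3, pd ρ j x * pd φf j x)
          - (2/ε^2) * ((a x - ρ x^2) * (ρ x * φf x)))
        = fun x => ((∑ j : Fin 3, pd ρ j x * pd φf j x)
              + (2/ε^2) * (ρ x^2 * (ρ x * φf x)))
            + a x * (-((2/ε^2) * (ρ x * φf x))) + a x^2 * 0 := by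
      funext x; ring
    rw [he]
    exact haInt _ _ _
      ((continuous_finset_sum _ fun j _ => (hpdρC j).mul (hpdφC j)).add
        (continuous_const.mul ((hρC.pow 2).mul (hρC.mul hφfC))))
      ((continuous_const.mul (hρC.mul hφfC)).neg) continuous_const
  have hP2int : IntegrableOn
      (fun x => ((1:ℝ)/2) * gradSqR φf x
        + 1/(2*ε^2) * ((2*ρ x*φf x)^2 - 2*(a x - ρ x^2)*(φf x)^2)) Ω volume := by
    have he : (fun x => ((1:ℝ)/2) * gradSqR φf x
          + 1/(2*ε^2) * ((2*ρ x*φf x)^2 - 2*(a x - ρ x^2)*(φf x)^2))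
        = fun x => (((1:ℝ)/2) * gradSqR φf x
              + 1/(2*ε^2) * ((2*ρ x*φf x)^2 + 2*ρ x^2*(φf x)^2))
            + a x * (-(1/(2*ε^2)) * (2*(φf x)^2)) + a x^2 * 0 := by
      funext x; ring
    rw [he]
    exact haInt _ _ _
      ((continuous_const.mul hgradφC).add
        (continuous_const.mul ((((continuous_const.mul hρC).mul hφfC).pow 2).add
          ((continuous_const.mul (hρC.pow 2)).mul (hφfC.pow 2)))))
      (continuous_const.mul (continuous_const.mul (hφfC.pow 2))) continuous_const
  have hP3int : IntegrableOn
      (fun x => 1/(2*ε^2) * (2*(2*ρ x*φf x)*(φf x)^2)) Ω volume :=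
    contInt _ (continuous_const.mul ((continuous_const.mul
      ((continuous_const.mul hρC).mul hφfC)).mul (hφfC.pow 2)))
  have hP4int : IntegrableOn (fun x => 1/(2*ε^2) * (φf x)^4) Ω volume :=
    contInt _ (continuous_const.mul (hφfC.pow 4))
  -- vanishing of the first variation
  have h0 : ∀ t : ℝ, 0 ≤ (∫ x in Ω, ((∑ j : Fin 3, pd ρ j x * pd φf j x)
          - (2/ε^2) * ((a x - ρ x^2) * (ρ x * φf x)))) * t
      + (∫ x in Ω, (((1:ℝ)/2) * gradSqR φf x
          + 1/(2*ε^2) * ((2*ρ x*φf x)^2 - 2*(a x - ρ x^2)*(φf x)^2))) * t^2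
      + (∫ x in Ω, 1/(2*ε^2) * (2*(2*ρ x*φf x)*(φf x)^2)) * t^3
      + (∫ x in Ω, 1/(2*ε^2) * (φf x)^4) * t^4 := by
    intro t
    have hvt : ContDiff ℝ 1 (fun y => ρ y + t * φf y) := hρ1.add (contDiff_const.mul hφC1)
    have h := hmin (fun y => ρ y + t * φf y) hvt
    have hQ1 : IntegrableOn (fun x => t * ((∑ j : Fin 3, pd ρ j x * pd φf j x)
        - (2/ε^2) * ((a x - ρ x^2) * (ρ x * φf x)))) Ω volume := hP1int.const_mul t
    have hQ2 : IntegrableOn (fun x => t^2 * (((1:ℝ)/2) * gradSqR φf x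
        + 1/(2*ε^2) * ((2*ρ x*φf x)^2 - 2*(a x - ρ x^2)*(φf x)^2))) Ω volume :=
      hP2int.const_mul (t^2)
    have hQ3 : IntegrableOn (fun x => t^3 * (1/(2*ε^2) * (2*(2*ρ x*φf x)*(φf x)^2))) Ω volume :=
      hP3int.const_mul (t^3)
    have hQ4 : IntegrableOn (fun x => t^4 * (1/(2*ε^2) * (φf x)^4)) Ω volume :=
      hP4int.const_mul (t^4)
    have hQ34 : IntegrableOn (fun x => t^3 * (1/(2*ε^2) * (2*(2*ρ x*φf x)*(φf x)^2))
        + t^4 * (1/(2*ε^2) * (φf x)^4)) Ω volume := hQ3.add hQ4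
    have hQ234 : IntegrableOn (fun x => t^2 * (((1:ℝ)/2) * gradSqR φf x
        + 1/(2*ε^2) * ((2*ρ x*φf x)^2 - 2*(a x - ρ x^2)*(φf x)^2))
        + (t^3 * (1/(2*ε^2) * (2*(2*ρ x*φf x)*(φf x)^2))
        + t^4 * (1/(2*ε^2) * (φf x)^4))) Ω volume := hQ2.add hQ34
    have hQ1234 : IntegrableOn (fun x => t * ((∑ j : Fin 3, pd ρ j x * pd φf j x)
        - (2/ε^2) * ((a x - ρ x^2) * (ρ x * φf x)))
        + (t^2 * (((1:ℝ)/2) * gradSqR φf x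
            + 1/(2*ε^2) * ((2*ρ x*φf x)^2 - 2*(a x - ρ x^2)*(φf x)^2))
        + (t^3 * (1/(2*ε^2) * (2*(2*ρ x*φf x)*(φf x)^2))
        + t^4 * (1/(2*ε^2) * (φf x)^4)))) Ω volume := hQ1.add hQ234
    have B1 : (∫ x in Ω, t * ((∑ j : Fin 3, pd ρ j x * pd φf j x)
          - (2/ε^2) * ((a x - ρ x^2) * (ρ x * φf x))))
        = t * ∫ x in Ω, ((∑ j : Fin 3, pd ρ j x * pd φf j x)
          - (2/ε^2) * ((a x - ρ x^2) * (ρ x * φf x))) := integral_const_mul t _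
    have B2 : (∫ x in Ω, t^2 * (((1:ℝ)/2) * gradSqR φf x
          + 1/(2*ε^2) * ((2*ρ x*φf x)^2 - 2*(a x - ρ x^2)*(φf x)^2)))
        = t^2 * ∫ x in Ω, (((1:ℝ)/2) * gradSqR φf x
          + 1/(2*ε^2) * ((2*ρ x*φf x)^2 - 2*(a x - ρ x^2)*(φf x)^2)) := integral_const_mul _ _
    have B3 : (∫ x in Ω, t^3 * (1/(2*ε^2) * (2*(2*ρ x*φf x)*(φf x)^2)))
        = t^3 * ∫ x in Ω, 1/(2*ε^2) * (2*(2*ρ x*φf x)*(φf x)^2) := integral_const_mul _ _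
    have B4 : (∫ x in Ω, t^4 * (1/(2*ε^2) * (φf x)^4))
        = t^4 * ∫ x in Ω, 1/(2*ε^2) * (φf x)^4 := integral_const_mul _ _
    have hsp : (∫ x in Ω, (((1:ℝ)/2) * gradSqR (fun y => ρ y + t * φf y) x
          + (1/(2*ε^2)) * (a x - (fun y => ρ y + t * φf y) x ^ 2) ^ 2))
        = (∫ x in Ω, (((1:ℝ)/2) * gradSqR ρ x + (1/(2*ε^2)) * (a x - ρ x ^ 2) ^ 2))
          + (t * (∫ x in Ω, ((∑ j : Fin 3, pd ρ j x * pd φf j x)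
              - (2/ε^2) * ((a x - ρ x^2) * (ρ x * φf x))))
          + (t^2 * (∫ x in Ω, (((1:ℝ)/2) * gradSqR φf x
              + 1/(2*ε^2) * ((2*ρ x*φf x)^2 - 2*(a x - ρ x^2)*(φf x)^2)))
          + (t^3 * (∫ x in Ω, 1/(2*ε^2) * (2*(2*ρ x*φf x)*(φf x)^2))
          + t^4 * (∫ x in Ω, 1/(2*ε^2) * (φf x)^4)))) := by
      calc (∫ x in Ω, (((1:ℝ)/2) * gradSqR (fun y => ρ y + t * φf y) x
            + (1/(2*ε^2)) * (a x - (fun y => ρ y + t * φf y) x ^ 2) ^ 2))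
          = ∫ x in Ω, ((((1:ℝ)/2) * gradSqR ρ x + 1/(2*ε^2) * (a x - ρ x^2)^2)
              + (t * ((∑ j : Fin 3, pd ρ j x * pd φf j x)
                  - (2/ε^2) * ((a x - ρ x^2) * (ρ x * φf x)))
              + (t^2 * (((1:ℝ)/2) * gradSqR φf x
                  + 1/(2*ε^2) * ((2*ρ x*φf x)^2 - 2*(a x - ρ x^2)*(φf x)^2))
              + (t^3 * (1/(2*ε^2) * (2*(2*ρ x*φf x)*(φf x)^2))
              + t^4 * (1/(2*ε^2) * (φf x)^4))))) :=
            integral_congr_ae (Filter.Eventually.of_forall fun x =>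
              poly_ptwise ε (a x) t ρ φf hρd hφd x)
        _ = (∫ x in Ω, (((1:ℝ)/2) * gradSqR ρ x + 1/(2*ε^2) * (a x - ρ x^2)^2))
              + ∫ x in Ω, (t * ((∑ j : Fin 3, pd ρ j x * pd φf j x)
                  - (2/ε^2) * ((a x - ρ x^2) * (ρ x * φf x)))
              + (t^2 * (((1:ℝ)/2) * gradSqR φf x
                  + 1/(2*ε^2) * ((2*ρ x*φf x)^2 - 2*(a x - ρ x^2)*(φf x)^2))
              + (t^3 * (1/(2*ε^2) * (2*(2*ρ x*φf x)*(φf x)^2))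
              + t^4 * (1/(2*ε^2) * (φf x)^4)))) :=
            integral_add hP0int hQ1234
        _ = _ := by rw [integral_add hQ1 hQ234, integral_add hQ2 hQ34,
              integral_add hQ3 hQ4, B1, B2, B3, B4]
    rw [hsp] at h
    nlinarith [h]
  have hI1 : (∫ x in Ω, ((∑ j : Fin 3, pd ρ j x * pd φf j x)
      - (2/ε^2) * ((a x - ρ x^2) * (ρ x * φf x)))) = 0 := c1_eq_zero h0
  -- integrability of the right-hand side pieces
  have hcovint : IntegrableOn (fun x => ((1:ℝ)/2) * ρ x ^ 2 * covSq u A x) Ω volume := by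
    have h := covSq_weighted_intOn Ω hΩmeas hΩbdd u hu A hA
      (fun x => ((1:ℝ)/2) * ρ x ^ 2) (continuous_const.mul (hρC.pow 2))
    exact h
  have hR2int : IntegrableOn (fun x => ((1:ℝ)/2) * ρ x ^ 2 * covSq u A x
      + (ρ x ^ 4 / (2*ε^2)) * (1 - ‖u x‖ ^ 2) ^ 2) Ω volume :=
    hcovint.add (contInt _ (((hρC.pow 4).div_const _).mul
      ((continuous_const.sub (hu.continuous.norm.pow 2)).pow 2)))
  have hQh : IntegrableOn (fun x => (1/2 : ℝ) * ((∑ j : Fin 3, pd ρ j x * pd φf j x)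
      - (2/ε^2) * ((a x - ρ x^2) * (ρ x * φf x)))) Ω volume := hP1int.const_mul (1/2)
  have hR2q : IntegrableOn (fun x => (((1:ℝ)/2) * ρ x ^ 2 * covSq u A x
      + (ρ x ^ 4 / (2*ε^2)) * (1 - ‖u x‖ ^ 2) ^ 2)
      + (1/2 : ℝ) * ((∑ j : Fin 3, pd ρ j x * pd φf j x)
        - (2/ε^2) * ((a x - ρ x^2) * (ρ x * φf x)))) Ω volume := hR2int.add hQh
  have Bh : (∫ x in Ω, (1/2 : ℝ) * ((∑ j : Fin 3, pd ρ j x * pd φf j x)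
        - (2/ε^2) * ((a x - ρ x^2) * (ρ x * φf x))))
      = (1/2 : ℝ) * ∫ x in Ω, ((∑ j : Fin 3, pd ρ j x * pd φf j x)
        - (2/ε^2) * ((a x - ρ x^2) * (ρ x * φf x))) := integral_const_mul _ _
  -- final computation
  calc (∫ x in Ω, (((1:ℝ)/2) * covSq (fun y => (ρ y : ℂ) * u y) A x
        + (1/(2*ε^2)) * (a x - ‖(ρ x : ℂ) * u x‖ ^ 2) ^ 2))
      = ∫ x in Ω, ((((1:ℝ)/2) * gradSqR ρ x + (1/(2*ε^2)) * (a x - ρ x ^ 2) ^ 2)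
          + ((((1:ℝ)/2) * ρ x ^ 2 * covSq u A x + (ρ x ^ 4 / (2*ε^2)) * (1 - ‖u x‖ ^ 2) ^ 2)
          + (1/2) * ((∑ j : Fin 3, pd ρ j x * pd φf j x)
              - (2/ε^2) * ((a x - ρ x^2) * (ρ x * φf x))))) :=
        integral_congr_ae (Filter.Eventually.of_forall fun x =>
          key_ptwise ε (a x) ρ u A hρd hud x)
    _ = (∫ x in Ω, (((1:ℝ)/2) * gradSqR ρ x + (1/(2*ε^2)) * (a x - ρ x ^ 2) ^ 2))
          + ∫ x in Ω, ((((1:ℝ)/2) * ρ x ^ 2 * covSq u A x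
              + (ρ x ^ 4 / (2*ε^2)) * (1 - ‖u x‖ ^ 2) ^ 2)
          + (1/2) * ((∑ j : Fin 3, pd ρ j x * pd φf j x)
              - (2/ε^2) * ((a x - ρ x^2) * (ρ x * φf x)))) :=
        integral_add hP0int hR2q
    _ = _ := by rw [integral_add hR2int hQh, Bh, hI1]; ring
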